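/- For all real x with 0 < |x| < π/2, 2·(sin x / x) + (tan x / x) > 3. -/

import Mathlib

open Real

lemma huygens_key (x : ℝ) (hx : 0 < x) (hx2 : x < π/2) :
    3 * x < 2 * Real.sin x + Real.tan x := by
  set f : ℝ → ℝ := fun t => 2 * Real.sin t + Real.tan t - 3 * t with hf
  have hmono : StrictMonoOn f (Set.Ico 0 (π/2)) := by
    apply strictMonoOn_of_deriv_pos (convex_Ico _ _)
    · apply ContinuousOn.sub
      · apply ContinuousOn.add
        · exact (continuous_sin.continuousOn).const_smul 2 |>.congr fun t _ => by simp [smul_eq_mul]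
        · apply Real.continuousOn_tan.mono
          intro t ht
          have : 0 < Real.cos t :=
            Real.cos_pos_of_mem_Ioo ⟨lt_of_lt_of_le (by linarith [Real.pi_pos]) ht.1, ht.2⟩
          exact ne_of_gt this
      · exact (continuous_const.mul continuous_id).continuousOn
    · intro t ht
      rw [interior_Ico] at ht
      have hc : 0 < Real.cos t := Real.cos_pos_of_mem_Ioo ⟨by linarith [Real.pi_pos, ht.1], ht.2⟩
      have hc1 : Real.cos t < 1 := by
        have := Real.cos_lt_cos_of_nonneg_of_le_pi (le_refl 0) ?_ ht.1
        · simpa using this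
        · linarith [Real.pi_pos, ht.2]
      have hd : HasDerivAt f (2 * Real.cos t + 1 / Real.cos t ^ 2 - 3) t := by
        have h1 : HasDerivAt (fun t => 2 * Real.sin t) (2 * Real.cos t) t :=
          (Real.hasDerivAt_sin t).const_mul 2
        have h2 : HasDerivAt Real.tan (1 / Real.cos t ^ 2) t :=
          Real.hasDerivAt_tan (ne_of_gt hc)
        have h3 : HasDerivAt (fun t : ℝ => 3 * t) 3 t := by
          simpa using (hasDerivAt_id t).const_mul 3
        exact (h1.add h2).sub h3
      rw [hd.deriv]
      have hc2 : (0:ℝ) < Real.cos t ^ 2 := by positivity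
      rw [show (0:ℝ) < 2 * Real.cos t + 1 / Real.cos t ^ 2 - 3 ↔
          3 - 2 * Real.cos t < 1 / Real.cos t ^ 2 by constructor <;> intro <;> linarith,
        lt_div_iff₀ hc2]
      nlinarith [sq_nonneg (1 - Real.cos t), hc, hc1]
  have h0 : f 0 < f x := hmono (by constructor <;> [rfl; linarith [Real.pi_pos]])
    ⟨le_of_lt hx, hx2⟩ hx
  simp only [hf, Real.sin_zero, Real.tan_zero] at h0
  linarith

theorem stmt19 (x : ℝ) (h1 : 0 < |x|) (h2 : |x| < π/2) :
    2 * (sin x / x) + tan x / x > 3 := by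
  rcases lt_trichotomy x 0 with hx | hx | hx
  · rw [abs_of_neg hx] at h2
    have key := huygens_key (-x) (by linarith) h2
    rw [Real.sin_neg, Real.tan_neg] at key
    have hx' : (0:ℝ) < -x := by linarith
    have : 3 < (2 * Real.sin x + Real.tan x) / x := by
      rw [show (2 * Real.sin x + Real.tan x) / x = (2 * -Real.sin x + -Real.tan x) / (-x) by
        rw [div_neg]; ring_nf, lt_div_iff₀ hx']
      linarith
    calc (3:ℝ) < (2 * Real.sin x + Real.tan x) / x := this
      _ = 2 * (Real.sin x / x) + Real.tan x / x := by ring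
  · simp [hx] at h1
  · rw [abs_of_pos hx] at h2
    have key := huygens_key x hx h2
    have : 3 < (2 * Real.sin x + Real.tan x) / x := by
      rw [lt_div_iff₀ hx]; linarith
    calc (3:ℝ) < (2 * Real.sin x + Real.tan x) / x := this
      _ = 2 * (Real.sin x / x) + Real.tan x / x := by ring
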